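/- Let π be a policy, π̃ another policy, ω ∈ [0,1], and define π' = (1-ω)π + ωπ̃. Let Q : S × A → ℝ and χ = ‖H Q − H_{π̃} Q‖∞. Then ‖Q* − Q^{π'}‖∞² ≤ (1 − ω(1−γ)) ‖Q* − Q^{π}‖∞² + (6ω/(1−γ)³) ‖Q − Q^{π}‖∞² + (5ω/(1−γ)³) χ². -/

import Mathlib

noncomputable section

/-- A policy assigns to each state a probability distribution over actions. -/
def IsPolicy {S A : Type*} [Fintype A] (π : S → A → ℝ) : Prop :=
  (∀ s a, 0 ≤ π s a) ∧ ∀ s, ∑ a, π s a = 1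

/-- A transition kernel assigns to each state-action pair a probability distribution over states. -/
def IsKernel {S A : Type*} [Fintype S] (p : S → A → S → ℝ) : Prop :=
  (∀ s a s', 0 ≤ p s a s') ∧ ∀ s a, ∑ s', p s a s' = 1

/-- Sup norm on `S × A → ℝ` (functions `S → A → ℝ`). -/
def supNorm {S A : Type*} [Fintype S] [Fintype A] [Nonempty S] [Nonempty A]
    (Q : S → A → ℝ) : ℝ :=
  Finset.univ.sup' Finset.univ_nonempty (fun sa : S × A => |Q sa.1 sa.2|)

/-- Total variation distance between two distributions on a finite set. -/
def dTV {Ω : Type*} [Fintype Ω] (p₁ p₂ : Ω → ℝ) : ℝ :=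
  (∑ x, |p₁ x - p₂ x|) / 2

/-- Weighted ℓ₂ norm with weights ν. -/
def nuNorm {S A : Type*} [Fintype S] [Fintype A] (ν : S → A → ℝ) (Q : S → A → ℝ) : ℝ :=
  Real.sqrt (∑ s, ∑ a, ν s a * (Q s a) ^ 2)

/-- Weighted ℓ₂ inner product with weights ν. -/
def nuInner {S A : Type*} [Fintype S] [Fintype A] (ν : S → A → ℝ) (Q₁ Q₂ : S → A → ℝ) : ℝ :=
  ∑ s, ∑ a, ν s a * Q₁ s a * Q₂ s a

/-- Bellman operator associated with a policy π. -/
def bellman {S A : Type*} [Fintype S] [Fintype A]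
    (p : S → A → S → ℝ) (R : S → A → ℝ) (γ : ℝ) (π : S → A → ℝ)
    (Q : S → A → ℝ) : S → A → ℝ :=
  fun s a => R s a + γ * ∑ s', p s a s' * ∑ a', π s' a' * Q s' a'

/-- Bellman optimality operator. -/
def bellmanOpt {S A : Type*} [Fintype S] [Fintype A] [Nonempty A]
    (p : S → A → S → ℝ) (R : S → A → ℝ) (γ : ℝ)
    (Q : S → A → ℝ) : S → A → ℝ :=
  fun s a => R s a + γ * ∑ s', p s a s' *
    Finset.univ.sup' Finset.univ_nonempty (fun a' => Q s' a')

/-- Expected operator F̄(Q,π) = (I − D)Q + D H_π Q, where D has diagonal entries μ_b(s)π_b(a|s). -/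
def Fbar {S A : Type*} [Fintype S] [Fintype A]
    (p : S → A → S → ℝ) (R : S → A → ℝ) (γ : ℝ)
    (μb : S → ℝ) (πb : S → A → ℝ) (π : S → A → ℝ) (Q : S → A → ℝ) : S → A → ℝ :=
  fun s a => (1 - μb s * πb s a) * Q s a + μb s * πb s a * bellman p R γ π Q s a

/-- Importance-sampling TD operator, for y = ((s₁,a₁),(s₂,a₂)). -/
def FIS {S A : Type*} [Fintype S] [Fintype A] [DecidableEq S] [DecidableEq A]
    (R : S → A → ℝ) (γ : ℝ) (πb : S → A → ℝ)
    (Q : S → A → ℝ) (y : (S × A) × S × A) (π : S → A → ℝ) : S → A → ℝ :=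
  fun s a => if (s, a) = y.1 then
      R y.1.1 y.1.2 + γ * (π y.2.1 y.2.2 / πb y.2.1 y.2.2) * Q y.2.1 y.2.2
    else Q s a

/-- Expected-TD operator, for u = (s₁,a₁,s₂). -/
def FETD {S A : Type*} [Fintype S] [Fintype A] [DecidableEq S] [DecidableEq A]
    (R : S → A → ℝ) (γ : ℝ)
    (Q : S → A → ℝ) (u : S × A × S) (π : S → A → ℝ) : S → A → ℝ :=
  fun s a => if (s, a) = (u.1, u.2.1) then
      R u.1 u.2.1 + γ * ∑ a', π u.2.2 a' * Q u.2.2 a'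
    else Q s a

/-- State transition matrix induced by a policy. -/
def Pmat {S A : Type*} [Fintype A] (p : S → A → S → ℝ) (π : S → A → ℝ) : Matrix S S ℝ :=
  Matrix.of fun s s' => ∑ a, π s a * p s a s'

end

set_option linter.unusedSectionVars false
set_option linter.unusedVariables false
set_option maxHeartbeats 1000000

section aux
variable {S A : Type*} [Fintype S] [Fintype A] [Nonempty S] [Nonempty A]

lemma abs_le_supNorm (Q : S → A → ℝ) (s : S) (a : A) : |Q s a| ≤ supNorm Q :=
  Finset.le_sup' (fun sa : S × A => |Q sa.1 sa.2|) (Finset.mem_univ (s, a))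

lemma supNorm_nonneg (Q : S → A → ℝ) : 0 ≤ supNorm Q := by
  obtain ⟨s⟩ := (inferInstance : Nonempty S); obtain ⟨a⟩ := (inferInstance : Nonempty A)
  exact le_trans (abs_nonneg _) (abs_le_supNorm Q s a)

lemma supNorm_le {Q : S → A → ℝ} {c : ℝ} (h : ∀ s a, |Q s a| ≤ c) : supNorm Q ≤ c :=
  Finset.sup'_le _ _ fun sa _ => h sa.1 sa.2

lemma supNorm_sub_comm (f g : S → A → ℝ) :
    supNorm (fun s a => f s a - g s a) = supNorm (fun s a => g s a - f s a) := by
  unfold supNorm; congr 1; funext sa; rw [abs_sub_comm]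

lemma weighted_le {ι : Type*} [Fintype ι] {w f : ι → ℝ} {t : ℝ}
    (h0 : ∀ i, 0 ≤ w i) (h1 : ∑ i, w i = 1) (hf : ∀ i, f i ≤ t) :
    ∑ i, w i * f i ≤ t := by
  calc ∑ i, w i * f i ≤ ∑ i, w i * t :=
        Finset.sum_le_sum fun i _ => mul_le_mul_of_nonneg_left (hf i) (h0 i)
    _ = t := by rw [← Finset.sum_mul, h1, one_mul]

lemma weighted_ge {ι : Type*} [Fintype ι] {w f : ι → ℝ} {t : ℝ}
    (h0 : ∀ i, 0 ≤ w i) (h1 : ∑ i, w i = 1) (hf : ∀ i, t ≤ f i) :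
    t ≤ ∑ i, w i * f i := by
  calc t = ∑ i, w i * t := by rw [← Finset.sum_mul, h1, one_mul]
    _ ≤ ∑ i, w i * f i :=
        Finset.sum_le_sum fun i _ => mul_le_mul_of_nonneg_left (hf i) (h0 i)

end aux

section bell
variable {S A : Type*} [Fintype S] [Fintype A] [Nonempty S] [Nonempty A]
variable (p : S → A → S → ℝ) (R : S → A → ℝ) (γ : ℝ) (π : S → A → ℝ)

lemma bellman_sub (Q1 Q2 : S → A → ℝ) (s : S) (a : A) :
    bellman p R γ π Q1 s a - bellman p R γ π Q2 s a
      = γ * ∑ s', p s a s' * ∑ a', π s' a' * (Q1 s' a' - Q2 s' a') := by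
  unfold bellman
  have h1 : ∀ s', (∑ a', π s' a' * Q1 s' a') - (∑ a', π s' a' * Q2 s' a')
      = ∑ a', π s' a' * (Q1 s' a' - Q2 s' a') := fun s' => by
    rw [← Finset.sum_sub_distrib]; exact Finset.sum_congr rfl fun a' _ => by ring
  have h2 : (∑ s', p s a s' * ∑ a', π s' a' * Q1 s' a')
      - (∑ s', p s a s' * ∑ a', π s' a' * Q2 s' a')
      = ∑ s', p s a s' * ∑ a', π s' a' * (Q1 s' a' - Q2 s' a') := by
    rw [← Finset.sum_sub_distrib]
    exact Finset.sum_congr rfl fun s' _ => by rw [← h1]; ring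
  rw [← h2]; ring

lemma bellmanOpt_sub (Q1 Q2 : S → A → ℝ) (s : S) (a : A) :
    bellmanOpt p R γ Q1 s a - bellmanOpt p R γ Q2 s a
      = γ * ∑ s', p s a s' *
          (Finset.univ.sup' Finset.univ_nonempty (fun a' => Q1 s' a')
            - Finset.univ.sup' Finset.univ_nonempty (fun a' => Q2 s' a')) := by
  unfold bellmanOpt
  have h2 : (∑ s', p s a s' * Finset.univ.sup' Finset.univ_nonempty (fun a' => Q1 s' a'))
      - (∑ s', p s a s' * Finset.univ.sup' Finset.univ_nonempty (fun a' => Q2 s' a'))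
      = ∑ s', p s a s' *
          (Finset.univ.sup' Finset.univ_nonempty (fun a' => Q1 s' a')
            - Finset.univ.sup' Finset.univ_nonempty (fun a' => Q2 s' a')) := by
    rw [← Finset.sum_sub_distrib]
    exact Finset.sum_congr rfl fun s' _ => by ring
  rw [← h2]; ring

variable (hp : IsKernel p) (hπ : IsPolicy π) (hγ0 : 0 ≤ γ)

include hp hπ hγ0 in
lemma bellman_diff_le (Q1 Q2 : S → A → ℝ) (s : S) (a : A) :
    bellman p R γ π Q1 s a - bellman p R γ π Q2 s a
      ≤ γ * supNorm (fun s a => Q1 s a - Q2 s a) := by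
  rw [bellman_sub]
  refine mul_le_mul_of_nonneg_left ?_ hγ0
  refine weighted_le (hp.1 s a) (hp.2 s a) fun s' => ?_
  refine weighted_le (hπ.1 s') (hπ.2 s') fun a' => ?_
  exact le_trans (le_abs_self _) (abs_le_supNorm (fun s a => Q1 s a - Q2 s a) s' a')

include hp hγ0 in
lemma bellmanOpt_diff_le (Q1 Q2 : S → A → ℝ) (s : S) (a : A) :
    bellmanOpt p R γ Q1 s a - bellmanOpt p R γ Q2 s a
      ≤ γ * supNorm (fun s a => Q1 s a - Q2 s a) := by
  rw [bellmanOpt_sub]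
  refine mul_le_mul_of_nonneg_left ?_ hγ0
  refine weighted_le (hp.1 s a) (hp.2 s a) fun s' => ?_
  rw [sub_le_iff_le_add]
  refine Finset.sup'_le _ _ fun a' _ => ?_
  have h1 : Q1 s' a' - Q2 s' a' ≤ supNorm (fun s a => Q1 s a - Q2 s a) :=
    le_trans (le_abs_self _) (abs_le_supNorm (fun s a => Q1 s a - Q2 s a) s' a')
  have h2 : Q2 s' a' ≤ Finset.univ.sup' Finset.univ_nonempty (fun a' => Q2 s' a') :=
    Finset.le_sup' _ (Finset.mem_univ a')
  linarith

include hp hπ hγ0 in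
lemma bellman_le_bellmanOpt (Q : S → A → ℝ) (s : S) (a : A) :
    bellman p R γ π Q s a ≤ bellmanOpt p R γ Q s a := by
  unfold bellman bellmanOpt
  refine add_le_add le_rfl (mul_le_mul_of_nonneg_left (Finset.sum_le_sum fun s' _ => ?_) hγ0)
  refine mul_le_mul_of_nonneg_left ?_ (hp.1 s a s')
  exact weighted_le (hπ.1 s') (hπ.2 s') fun a' => Finset.le_sup' _ (Finset.mem_univ a')

include hp hπ hγ0 in
lemma le_opt (hγ1 : γ < 1) (Qstar Qpi : S → A → ℝ)
    (hQstar : bellmanOpt p R γ Qstar = Qstar)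
    (hQpi : bellman p R γ π Qpi = Qpi) :
    ∀ s a, Qpi s a ≤ Qstar s a := by
  set f : S × A → ℝ := fun sa => Qstar sa.1 sa.2 - Qpi sa.1 sa.2 with hf
  set t := Finset.univ.inf' Finset.univ_nonempty f with htdef
  have ht : ∀ s a, t ≤ Qstar s a - Qpi s a := fun s a =>
    Finset.inf'_le f (Finset.mem_univ (s, a))
  obtain ⟨sa0, _, hsa0⟩ := Finset.exists_mem_eq_inf' Finset.univ_nonempty f
  have key : γ * t ≤ t := by
    have h1 : γ * t ≤ bellman p R γ π Qstar sa0.1 sa0.2 - bellman p R γ π Qpi sa0.1 sa0.2 := by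
      rw [bellman_sub]
      refine mul_le_mul_of_nonneg_left ?_ hγ0
      refine weighted_ge (hp.1 sa0.1 sa0.2) (hp.2 sa0.1 sa0.2) fun s' => ?_
      exact weighted_ge (hπ.1 s') (hπ.2 s') fun a' => ht s' a'
    have h2 := bellman_le_bellmanOpt p R γ π hp hπ hγ0 Qstar sa0.1 sa0.2
    have h3 : bellmanOpt p R γ Qstar sa0.1 sa0.2 = Qstar sa0.1 sa0.2 := by
      rw [hQstar]
    have h4 : bellman p R γ π Qpi sa0.1 sa0.2 = Qpi sa0.1 sa0.2 := by rw [hQpi]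
    have h5 : Qstar sa0.1 sa0.2 - Qpi sa0.1 sa0.2 = t := hsa0.symm
    linarith
  have ht0 : 0 ≤ t := by nlinarith
  intro s a; linarith [ht s a]

end bell



lemma drift_alg (δ ω D E χ κ : ℝ) (hδ0 : 0 < δ) (hδ1 : δ ≤ 1) (hω0 : 0 ≤ ω) (hω1 : ω ≤ 1)
    (hD : 0 ≤ D) (hE : 0 ≤ E) (hχ : 0 ≤ χ) (hκ : κ = 2*(1-δ)*E + χ) :
    ((1 - ω*δ)*D + ω*κ/δ)^2 ≤ (1 - ω*δ)*D^2 + 6*ω/δ^3*E^2 + 5*ω/δ^3*χ^2 := by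
  have hc0 : 0 ≤ 1 - ω*δ := by nlinarith
  have hκ0 : 0 ≤ κ := by nlinarith [mul_nonneg (by linarith : (0:ℝ) ≤ 1-δ) hE]
  have hκle : κ ≤ 2*E + χ := by nlinarith [mul_nonneg hδ0.le hE]
  have hκsq : κ^2 ≤ 6*E^2 + 5*χ^2 := by
    nlinarith [sq_nonneg (E - χ), mul_nonneg (by linarith : (0:ℝ) ≤ 2*E + χ - κ) (by linarith : (0:ℝ) ≤ 2*E + χ + κ)]
  have hpoly : δ*((1 - ω*δ)*δ*D + ω*κ)^2 ≤ (1 - ω*δ)*D^2*δ^3 + 6*ω*E^2 + 5*ω*χ^2 := by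
    nlinarith [mul_nonneg (mul_nonneg hω0 hc0) (sq_nonneg (δ^2*D - κ)),
      mul_nonneg hω0 (by linarith : (0:ℝ) ≤ 6*E^2 + 5*χ^2 - κ^2)]
  have hδ3 : (0:ℝ) < δ^3 := by positivity
  have goalEq : ((1 - ω*δ)*D + ω*κ/δ)^2 = δ*((1 - ω*δ)*δ*D + ω*κ)^2 / δ^3 := by
    field_simp
  have rhsEq : (1 - ω*δ)*D^2 + 6*ω/δ^3*E^2 + 5*ω/δ^3*χ^2
      = ((1 - ω*δ)*D^2*δ^3 + 6*ω*E^2 + 5*ω*χ^2)/δ^3 := by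
    field_simp
  rw [goalEq, rhsEq]
  exact (div_le_div_iff_of_pos_right hδ3).mpr hpoly


section mix
variable {S A : Type*} [Fintype S] [Fintype A]

lemma bellman_mix (p : S → A → S → ℝ) (R : S → A → ℝ) (γ ω : ℝ) (π πt : S → A → ℝ)
    (F : S → A → ℝ) (s : S) (a : A) :
    bellman p R γ (fun s a => (1-ω) * π s a + ω * πt s a) F s a
      = (1-ω) * bellman p R γ π F s a + ω * bellman p R γ πt F s a := by
  unfold bellman
  have hin : ∀ s', ∑ a', ((1-ω) * π s' a' + ω * πt s' a') * F s' a'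
      = (1-ω) * ∑ a', π s' a' * F s' a' + ω * ∑ a', πt s' a' * F s' a' := by
    intro s'
    rw [Finset.mul_sum, Finset.mul_sum, ← Finset.sum_add_distrib]
    exact Finset.sum_congr rfl fun a' _ => by ring
  have hout : ∑ s', p s a s' * ((1-ω) * (∑ a', π s' a' * F s' a')
        + ω * ∑ a', πt s' a' * F s' a')
      = (1-ω) * (∑ s', p s a s' * ∑ a', π s' a' * F s' a')
        + ω * (∑ s', p s a s' * ∑ a', πt s' a' * F s' a') := by
    rw [Finset.mul_sum, Finset.mul_sum, ← Finset.sum_add_distrib]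
    exact Finset.sum_congr rfl fun s' _ => by ring
  simp only [hin]
  rw [hout]; ring

lemma policy_mix {π πt : S → A → ℝ} (hπ : IsPolicy π) (hπt : IsPolicy πt)
    {ω : ℝ} (hω0 : 0 ≤ ω) (hω1 : ω ≤ 1) :
    IsPolicy (fun s a => (1-ω) * π s a + ω * πt s a) := by
  constructor
  · intro s a
    exact add_nonneg (mul_nonneg (by linarith) (hπ.1 s a)) (mul_nonneg hω0 (hπt.1 s a))
  · intro s
    rw [Finset.sum_add_distrib, ← Finset.mul_sum, ← Finset.mul_sum, hπ.2 s, hπt.2 s]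
    ring
end mix

/-- Squared actor drift inequality (Corollary A.2). -/
theorem actor_drift_squared {S A : Type*} [Fintype S] [Fintype A] [Nonempty S] [Nonempty A]
    (p : S → A → S → ℝ) (hp : IsKernel p)
    (R : S → A → ℝ) (hR : ∀ s a, 0 ≤ R s a ∧ R s a ≤ 1)
    (γ : ℝ) (hγ : 0 < γ ∧ γ < 1)
    (π πt : S → A → ℝ) (hπ : IsPolicy π) (hπt : IsPolicy πt)
    (ω : ℝ) (hω : 0 ≤ ω ∧ ω ≤ 1)
    (Q Qstar Qpi Qpi' : S → A → ℝ)
    (hQstar : bellmanOpt p R γ Qstar = Qstar)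
    (hQpi : bellman p R γ π Qpi = Qpi)
    (hQpi' : bellman p R γ (fun s a => (1 - ω) * π s a + ω * πt s a) Qpi' = Qpi')
    (χ : ℝ)
    (hχ : χ = supNorm (fun s a => bellmanOpt p R γ Q s a - bellman p R γ πt Q s a)) :
    supNorm (fun s a => Qstar s a - Qpi' s a) ^ 2
      ≤ (1 - ω * (1 - γ)) * supNorm (fun s a => Qstar s a - Qpi s a) ^ 2
        + (6 * ω / (1 - γ) ^ 3) * supNorm (fun s a => Q s a - Qpi s a) ^ 2
        + (5 * ω / (1 - γ) ^ 3) * χ ^ 2 := by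
  obtain ⟨hγ0', hγ1⟩ := hγ
  have hγ0 : (0:ℝ) ≤ γ := hγ0'.le
  obtain ⟨hω0, hω1⟩ := hω
  have hδ : (0:ℝ) < 1 - γ := by linarith
  set π' : S → A → ℝ := fun s a => (1 - ω) * π s a + ω * πt s a with hπ'def
  have hπ'pol : IsPolicy π' := by rw [hπ'def]; exact policy_mix hπ hπt hω0 hω1
  clear_value π'
  set D := supNorm (fun s a => Qstar s a - Qpi s a) with hD
  set E := supNorm (fun s a => Q s a - Qpi s a) with hE
  have hD0 : 0 ≤ D := by rw [hD]; exact supNorm_nonneg _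
  have hE0 : 0 ≤ E := by rw [hE]; exact supNorm_nonneg _
  clear_value D E
  have hχ0 : 0 ≤ χ := hχ ▸ supNorm_nonneg _
  set κ : ℝ := 2 * γ * E + χ with hκdef
  have hκ0 : 0 ≤ κ := by rw [hκdef]; positivity
  clear_value κ
  -- the pointwise Bellman residual of Qpi w.r.t. the optimality operator
  set r : S → A → ℝ := fun s a => bellmanOpt p R γ Qpi s a - Qpi s a with hrdef
  set v : S → A → ℝ := fun s a => bellman p R γ πt Qpi s a - Qpi s a with hvdef
  clear_value r v
  have hQpiEq : ∀ s a, bellman p R γ π Qpi s a = Qpi s a :=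
    fun s a => congrFun (congrFun hQpi s) a
  have hQstarEq : ∀ s a, bellmanOpt p R γ Qstar s a = Qstar s a :=
    fun s a => congrFun (congrFun hQstar s) a
  have hQpi'Eq : ∀ s a, bellman p R γ π' Qpi' s a = Qpi' s a :=
    fun s a => congrFun (congrFun hQpi' s) a
  -- r is nonnegative
  have hr0 : ∀ s a, 0 ≤ r s a := by
    intro s a
    have h := bellman_le_bellmanOpt p R γ π hp hπ hγ0 Qpi s a
    rw [hQpiEq s a] at h
    simp only [hrdef]; linarith
  -- r dominates the optimality gap up to γ·D
  have hrx : ∀ s a, Qstar s a - Qpi s a - γ * D ≤ r s a := by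
    intro s a
    have h := bellmanOpt_diff_le p R γ hp hγ0 Qstar Qpi s a
    rw [hQstarEq s a, ← hD] at h
    simp only [hrdef]; linarith
  -- v dominates r up to κ
  have hvr : ∀ s a, r s a - κ ≤ v s a := by
    intro s a
    have h1 := bellman_diff_le p R γ πt hp hπt hγ0 Q Qpi s a
    rw [← hE] at h1
    have h2 : |bellmanOpt p R γ Q s a - bellman p R γ πt Q s a| ≤ χ := by
      rw [hχ]
      exact abs_le_supNorm (fun s a => bellmanOpt p R γ Q s a - bellman p R γ πt Q s a) s a
    have h2' := (abs_le.mp h2).2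
    have h3 := bellmanOpt_diff_le p R γ hp hγ0 Qpi Q s a
    rw [supNorm_sub_comm Qpi Q, ← hE] at h3
    simp only [hrdef, hvdef, hκdef]
    linarith
  have hvlb : ∀ s a, -κ ≤ v s a := fun s a => by linarith [hvr s a, hr0 s a]
  -- the key identity for Δ = Qpi' − Qpi
  have hΔid : ∀ s a, Qpi' s a - Qpi s a
      = (bellman p R γ π' Qpi' s a - bellman p R γ π' Qpi s a) + ω * v s a := by
    intro s a
    have hmix := bellman_mix p R γ ω π πt Qpi s a
    rw [hQpiEq s a] at hmix
    have : bellman p R γ π' Qpi s a = (1 - ω) * Qpi s a + ω * bellman p R γ πt Qpi s a := by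
      rw [hπ'def]; exact hmix
    rw [hQpi'Eq s a, this]
    simp only [hvdef]; ring
  -- lower bound for the minimum of Δ
  set t := Finset.univ.inf' Finset.univ_nonempty (fun sa : S × A => Qpi' sa.1 sa.2 - Qpi sa.1 sa.2)
    with htdef
  have htle : ∀ s a, t ≤ Qpi' s a - Qpi s a := by
    rw [htdef]
    exact fun s a =>
      Finset.inf'_le (fun sa : S × A => Qpi' sa.1 sa.2 - Qpi sa.1 sa.2) (Finset.mem_univ (s, a))
  clear_value t
  have hPge : ∀ s a, γ * t ≤ bellman p R γ π' Qpi' s a - bellman p R γ π' Qpi s a := by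
    intro s a
    rw [bellman_sub]
    exact mul_le_mul_of_nonneg_left
      (weighted_ge (hp.1 s a) (hp.2 s a) fun s' =>
        weighted_ge (hπ'pol.1 s') (hπ'pol.2 s') fun a' => htle s' a') hγ0
  have htlb : -(ω * κ) / (1 - γ) ≤ t := by
    obtain ⟨sa1, _, hsa1⟩ := Finset.exists_mem_eq_inf' (Finset.univ_nonempty)
      (fun sa : S × A => Qpi' sa.1 sa.2 - Qpi sa.1 sa.2)
    have h1 : t = Qpi' sa1.1 sa1.2 - Qpi sa1.1 sa1.2 := htdef.trans hsa1
    have h2 := hΔid sa1.1 sa1.2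
    have h3 := hPge sa1.1 sa1.2
    have h4 : ω * (-κ) ≤ ω * v sa1.1 sa1.2 :=
      mul_le_mul_of_nonneg_left (hvlb sa1.1 sa1.2) hω0
    have h5 : γ * t - ω * κ ≤ t := by nlinarith
    rw [div_le_iff₀ hδ]
    nlinarith
  -- pointwise lower bound for Δ
  have hΔlb : ∀ s a, ω * r s a - ω * κ / (1 - γ) ≤ Qpi' s a - Qpi s a := by
    intro s a
    have h1 := hΔid s a
    have h2 := hPge s a
    have h3 : ω * (r s a - κ) ≤ ω * v s a := mul_le_mul_of_nonneg_left (hvr s a) hω0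
    have h4 : γ * (-(ω * κ) / (1 - γ)) ≤ γ * t := mul_le_mul_of_nonneg_left htlb hγ0
    have h5 : γ * (-(ω * κ) / (1 - γ)) - ω * κ = -(ω * κ / (1 - γ)) := by
      field_simp
      ring
    nlinarith
  -- componentwise two-sided bound
  set B : ℝ := (1 - ω * (1 - γ)) * D + ω * κ / (1 - γ) with hBdef
  clear_value B
  have hcoef0 : 0 ≤ 1 - ω * (1 - γ) := by nlinarith
  have hB0 : 0 ≤ B := by
    rw [hBdef]
    exact add_nonneg (mul_nonneg hcoef0 hD0) (div_nonneg (mul_nonneg hω0 hκ0) hδ.le)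
  have hcomp : ∀ s a, |Qstar s a - Qpi' s a| ≤ B := by
    intro s a
    have hlow := le_opt p R γ π' hp hπ'pol hγ0 hγ1 Qstar Qpi' hQstar hQpi' s a
    have hx : Qstar s a - Qpi s a ≤ D := by
      rw [hD]
      exact le_trans (le_abs_self _) (abs_le_supNorm (fun s a => Qstar s a - Qpi s a) s a)
    have h1 : ω * (Qstar s a - Qpi s a - γ * D) ≤ ω * r s a :=
      mul_le_mul_of_nonneg_left (hrx s a) hω0
    have h2 : (1 - ω) * (Qstar s a - Qpi s a) ≤ (1 - ω) * D :=
      mul_le_mul_of_nonneg_left hx (by linarith)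
    have h3 := hΔlb s a
    rw [abs_le]
    constructor
    · linarith
    · rw [hBdef]; nlinarith [hΔlb s a]
  have hDB : supNorm (fun s a => Qstar s a - Qpi' s a) ≤ B := supNorm_le hcomp
  have hsq : supNorm (fun s a => Qstar s a - Qpi' s a) ^ 2 ≤ B ^ 2 :=
    pow_le_pow_left₀ (supNorm_nonneg _) hDB 2
  have halg := drift_alg (1 - γ) ω D E χ κ hδ (by linarith) hω0 hω1 hD0 hE0 hχ0
    (by rw [hκdef]; ring)
  calc supNorm (fun s a => Qstar s a - Qpi' s a) ^ 2 ≤ B ^ 2 := hsq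
    _ ≤ (1 - ω * (1 - γ)) * D ^ 2 + 6 * ω / (1 - γ) ^ 3 * E ^ 2
        + 5 * ω / (1 - γ) ^ 3 * χ ^ 2 := by rw [hBdef]; exact halg
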